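/- Under the standing assumptions on the delay model, suppose additionally that r(t) > b(t) for all t ≥ 0. Let N be a positive solution of the initial value problem on [0, ∞) such that N'(t) > 0 for every t > 0. Then for every t > 0, N(g(t)) < K(t) · (r(t)/b(t) − 1)^{1/γ}, and consequently N(t) ≤ K(t) (r(t)/b(t) − 1)^{1/γ} · exp( ∫_{g(t)}^{t} (r(s) − b(s)) ds ) whenever g(t) ≥ 0. -/
import Mathlib

open MeasureTheory intervalIntegral

/-- If a positive global solution is strictly increasing (`N'(t) > 0` for all `t > 0`), then
`N(g(t)) < K(t)(r(t)/b(t) − 1)^{1/γ}` for all `t > 0`, and consequently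
`N(t) ≤ K(t)(r(t)/b(t) − 1)^{1/γ} · exp(∫_{g(t)}^t (r − b))` whenever `g(t) ≥ 0`. -/
theorem getz_ivp_increasing_solution_bound
    (γ : ℝ) (hγ : 0 < γ)
    (r b K g φ : ℝ → ℝ) (N₀ : ℝ)
    (hrc : ContinuousOn r (Set.Ici 0)) (hbc : ContinuousOn b (Set.Ici 0))
    (hKc : ContinuousOn K (Set.Ici 0))
    (hrpos : ∀ t ≥ (0 : ℝ), 0 < r t)
    (b₀ : ℝ) (hb₀ : 0 < b₀) (hb : ∀ t ≥ (0 : ℝ), b₀ ≤ b t)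
    (k : ℝ) (hk : 0 < k) (hKk : ∀ t ≥ (0 : ℝ), k ≤ K t)
    (hgc : Continuous g) (hg : ∀ t, g t ≤ t)
    (hgtop : ∀ M : ℝ, ∃ᶠ t in Filter.atTop, M ≤ g t)
    (hφc : ContinuousOn φ (Set.Iio 0)) (hφbd : ∃ C, ∀ t < (0 : ℝ), |φ t| ≤ C)
    (hφpos : ∀ t < (0 : ℝ), 0 ≤ φ t)
    (hN₀ : 0 < N₀)
    (hrb : ∀ t ≥ (0 : ℝ), b t < r t)
    -- `N` is a positive solution of the IVP on `[0, ∞)`, with derivative `N'`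
    (N N' : ℝ → ℝ)
    (hNc : Continuous N)
    (hphi : ∀ t < (0 : ℝ), N t = φ t)
    (hN0 : N 0 = N₀)
    (hderiv : ∀ t ∈ Set.Ici (0 : ℝ), HasDerivWithinAt N (N' t) (Set.Ici 0) t)
    (hN'c : ContinuousOn N' (Set.Ici 0))
    (heq : ∀ t ∈ Set.Ici (0 : ℝ),
      N' t = r t * N t / (1 + (N (g t) / K t) ^ γ) - b t * N t)
    (hpos : ∀ t ≥ (0 : ℝ), 0 < N t)
    -- `N` is strictly increasing on `(0, ∞)`
    (hinc : ∀ t > (0 : ℝ), 0 < N' t) :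
    ∀ t > (0 : ℝ),
      N (g t) < K t * (r t / b t - 1) ^ (1 / γ) ∧
      (0 ≤ g t → N t ≤ K t * (r t / b t - 1) ^ (1 / γ) *
        Real.exp (∫ s in g t..t, (r s - b s))) := by
  -- N(g s) is nonnegative for all s
  have hNg : ∀ s : ℝ, 0 ≤ N (g s) := by
    intro s
    rcases lt_or_ge (g s) 0 with h | h
    · rw [hphi _ h]; exact hφpos _ h
    · exact (hpos _ h).le
  have hxnn : ∀ s : ℝ, 0 ≤ s → 0 ≤ (N (g s) / K s) ^ γ := fun s hs =>
    Real.rpow_nonneg (div_nonneg (hNg s) (hk.trans_le (hKk s hs)).le) γ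
  -- key differential inequality: N' s ≤ N s * (r s - b s)
  have hkey : ∀ s : ℝ, 0 ≤ s → N' s ≤ N s * (r s - b s) := by
    intro s hs
    rw [heq s hs]
    have hx0 := hxnn s hs
    have h1x : (1:ℝ) ≤ 1 + (N (g s) / K s) ^ γ := by linarith
    have hrN : (0:ℝ) ≤ r s * N s := mul_nonneg (hrpos s hs).le (hpos s hs).le
    have := div_le_self hrN h1x
    nlinarith
  intro t ht
  have ht0 : (0:ℝ) ≤ t := ht.le
  have hKt : 0 < K t := hk.trans_le (hKk t ht0)
  have hbt : 0 < b t := hb₀.trans_le (hb t ht0)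
  have hNt : 0 < N t := hpos t ht0
  set x : ℝ := (N (g t) / K t) ^ γ with hxdef
  have hx0 : 0 ≤ x := hxnn t ht0
  have h1x : (0:ℝ) < 1 + x := by linarith
  have hd := hinc t ht
  rw [heq t ht0] at hd
  -- derive x < r t / b t - 1
  have hlt : x < r t / b t - 1 := by
    have h2 : b t * N t * (1 + x) < r t * N t := by
      have h3 : b t * N t < r t * N t / (1 + x) := by linarith
      exact (lt_div_iff₀ h1x).mp h3
    have h4 : b t * (1 + x) < r t := by nlinarith
    have h5 : 1 + x < r t / b t := (lt_div_iff₀ hbt).mpr (by nlinarith)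
    linarith
  -- first conclusion
  have hbase : 0 ≤ N (g t) / K t := div_nonneg (hNg t) hKt.le
  have hmono : x ^ (1/γ) < (r t / b t - 1) ^ (1/γ) :=
    Real.rpow_lt_rpow hx0 hlt (by positivity)
  have hid : x ^ (1/γ) = N (g t) / K t := by
    rw [hxdef, one_div, Real.rpow_rpow_inv hbase hγ.ne']
  rw [hid] at hmono
  have hfirst : N (g t) < K t * (r t / b t - 1) ^ (1/γ) := by
    have := (div_lt_iff₀ hKt).mp hmono
    linarith [this]
  refine ⟨hfirst, fun ha => ?_⟩
  -- second conclusion: Grönwall-type argument on [g t, t]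
  set a : ℝ := g t with hadef
  have hat : a ≤ t := hg t
  have hfc : ContinuousOn (fun s => r s - b s) (Set.Ici 0) := hrc.sub hbc
  have hsub : Set.uIcc a t ⊆ Set.Ici 0 := by
    rw [Set.uIcc_of_le hat]
    exact fun s hs => le_trans ha hs.1
  have hIntOn : IntegrableOn (fun s => r s - b s) (Set.uIcc a t) volume := by
    rw [Set.uIcc_of_le hat]
    exact (hfc.mono (by rw [Set.uIcc_of_le hat] at hsub; exact hsub)).integrableOn_Icc
  set G : ℝ → ℝ := fun s => ∫ u in a..s, (r u - b u) with hGdef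
  have hGc : ContinuousOn G (Set.Icc a t) := by
    have := intervalIntegral.continuousOn_primitive_interval hIntOn
    rwa [Set.uIcc_of_le hat] at this
  set F : ℝ → ℝ := fun s => N s * Real.exp (-(G s)) with hFdef
  have hFc : ContinuousOn F (Set.Icc a t) :=
    (hNc.continuousOn).mul (hGc.neg.rexp)
  -- derivative of F on the interior
  have hFd : ∀ s ∈ Set.Ioo a t, HasDerivAt F
      (N' s * Real.exp (-(G s)) + N s * (Real.exp (-(G s)) * -(r s - b s))) s := by
    intro s hs
    have hs0 : 0 < s := lt_of_le_of_lt ha hs.1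
    have hN : HasDerivAt N (N' s) s :=
      (hderiv s hs0.le).hasDerivAt (Ici_mem_nhds hs0)
    have hintS : IntervalIntegrable (fun u => r u - b u) volume a s := by
      apply ContinuousOn.intervalIntegrable
      apply hfc.mono
      rw [Set.uIcc_of_le hs.1.le]
      exact fun u hu => le_trans ha hu.1
    have hcontS : ContinuousAt (fun u => r u - b u) s :=
      hfc.continuousAt (Ici_mem_nhds hs0)
    have hmeas : StronglyMeasurableAtFilter (fun u => r u - b u) (nhds s) volume :=
      ContinuousAt.stronglyMeasurableAtFilter isOpen_Ioi
        (fun u hu => hfc.continuousAt (Ici_mem_nhds hu)) s hs0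
    have hG : HasDerivAt G (r s - b s) s :=
      intervalIntegral.integral_hasDerivAt_right hintS hmeas hcontS
    have hE : HasDerivAt (fun u => Real.exp (-(G u))) (Real.exp (-(G s)) * -(r s - b s)) s :=
      hG.neg.exp
    exact hN.mul hE
  have hFd' : DifferentiableOn ℝ F (interior (Set.Icc a t)) := by
    rw [interior_Icc]
    exact fun s hs => ((hFd s hs).differentiableAt).differentiableWithinAt
  have hF'le : ∀ s ∈ interior (Set.Icc a t), deriv F s ≤ 0 := by
    rw [interior_Icc]
    intro s hs
    have hs0 : 0 < s := lt_of_le_of_lt ha hs.1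
    rw [(hFd s hs).deriv]
    have hEp : 0 < Real.exp (-(G s)) := Real.exp_pos _
    have hk1 := hkey s hs0.le
    nlinarith
  have hA : AntitoneOn F (Set.Icc a t) :=
    antitoneOn_of_deriv_nonpos (convex_Icc a t) hFc hFd' hF'le
  have hFt : F t ≤ F a := hA ⟨le_refl a, hat⟩ ⟨hat, le_refl t⟩ hat
  have hGa : G a = 0 := intervalIntegral.integral_same
  have hFa : F a = N a := by simp [hFdef, hGa]
  rw [hFa] at hFt
  -- unfold: N t * exp(-(G t)) ≤ N a < K t * (...)^(1/γ)
  have hEt : 0 < Real.exp (G t) := Real.exp_pos _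
  have hNa : N a < K t * (r t / b t - 1) ^ (1/γ) := hfirst
  have : N t * Real.exp (-(G t)) ≤ K t * (r t / b t - 1) ^ (1/γ) := le_of_lt (lt_of_le_of_lt hFt hNa)
  have hfin : N t ≤ K t * (r t / b t - 1) ^ (1/γ) * Real.exp (G t) := by
    have h2 := mul_le_mul_of_nonneg_right this hEt.le
    rwa [mul_assoc, ← Real.exp_add, neg_add_cancel, Real.exp_zero, mul_one] at h2
  exact hfin
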